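/- Let M be a pointed metric space and let (fₙ) be a sequence of norm-one functions in Lip₀(M). For each n let Uₙ := {x ∈ M : fₙ(x) ≠ 0}, and suppose that for every n there is a point xₙ ∉ ⋃ₖ Uₖ such that d(y, xₙ) < d(y, x) for every y ∈ Uₙ and every x ∈ ⋃_{k≠n} Uₖ. Then (fₙ) is equivalent to the canonical basis of c₀; more precisely, for all scalars λ₁, …, λ_N, max_{1≤i≤N}|λᵢ| ≤ ‖Σᵢ λᵢ fᵢ‖ ≤ 2·max_{1≤i≤N}|λᵢ|. -/
import Mathlib


open Filter Topology

/-- The Lipschitz norm (best Lipschitz constant) of a function on a metric space. -/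
noncomputable def lipNorm {M : Type*} [MetricSpace M] (f : M → ℝ) : ℝ :=
  sSup {r : ℝ | ∃ x y : M, x ≠ y ∧ r = |f x - f y| / dist x y}

/-- Lemma 3.8: a sequence of norm-one Lipschitz functions with 'well separated' supports
is 2-equivalent to the canonical basis of `c₀` in `Lip₀(M)`. -/
theorem stmt7 {M : Type*} [MetricSpace M] (base : M)
    (f : ℕ → M → ℝ)
    (hlip : ∀ n, ∃ C : NNReal, LipschitzWith C (f n))
    (h0 : ∀ n, f n base = 0)
    (hnorm : ∀ n, lipNorm (f n) = 1)
    (x : ℕ → M)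
    (hx : ∀ n, x n ∉ ⋃ k : ℕ, {p : M | f k p ≠ 0})
    (hsep : ∀ n, ∀ y ∈ {p : M | f n p ≠ 0},
      ∀ k : ℕ, k ≠ n → ∀ q ∈ {p : M | f k p ≠ 0}, dist y (x n) < dist y q) :
    ∀ (N : ℕ) (l : Fin N → ℝ),
      (⨆ i, |l i|) ≤ lipNorm (fun p => ∑ i, l i * f (i : ℕ) p) ∧
      lipNorm (fun p => ∑ i, l i * f (i : ℕ) p) ≤ 2 * (⨆ i, |l i|) := by
  -- supports are pairwise disjoint
  have hdisj : ∀ (n k : ℕ), n ≠ k → ∀ p, f n p ≠ 0 → f k p = 0 := by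
    intro n k hnk p hp
    by_contra hq
    have h := hsep n p hp k (fun h => hnk h.symm) p hq
    simp at h
    exact absurd h (not_lt.mpr dist_nonneg)
  -- the points x n are outside all supports
  have hxz : ∀ n k : ℕ, f k (x n) = 0 := by
    intro n k
    have h := hx n
    simp only [Set.mem_iUnion, Set.mem_setOf_eq, not_exists, not_not] at h
    exact h k
  -- each f n is 1-Lipschitz
  have hfl : ∀ (n : ℕ) (p q : M), |f n p - f n q| ≤ dist p q := by
    intro n p q
    rcases eq_or_ne p q with rfl | hpq
    · simp
    · have hbdd : BddAbove {r : ℝ | ∃ a b : M, a ≠ b ∧ r = |f n a - f n b| / dist a b} := by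
        by_contra hb
        have h := Real.sSup_of_not_bddAbove hb
        have h1 := hnorm n
        simp only [lipNorm] at h1
        rw [h1] at h
        norm_num at h
      have hmem : |f n p - f n q| / dist p q ∈
          {r : ℝ | ∃ a b : M, a ≠ b ∧ r = |f n a - f n b| / dist a b} := ⟨p, q, hpq, rfl⟩
      have h := le_csSup hbdd hmem
      have h1 := hnorm n
      simp only [lipNorm] at h1
      rw [h1] at h
      rw [div_le_one (dist_pos.mpr hpq)] at h
      linarith
  intro N l
  set mx := ⨆ i, |l i| with hmxdef
  have hmx0 : 0 ≤ mx := Real.iSup_nonneg (fun i => abs_nonneg _)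
  have hlemx : ∀ i : Fin N, |l i| ≤ mx :=
    fun i => le_ciSup (Set.Finite.bddAbove (Set.finite_range (fun j => |l j|))) i
  set g : M → ℝ := fun p => ∑ i, l i * f (i : ℕ) p with hgdef
  -- sum collapses to a single term when one coordinate is nonzero
  have single : ∀ (n : Fin N) (p : M), f (n : ℕ) p ≠ 0 → g p = l n * f (n : ℕ) p := by
    intro n p hp
    apply Finset.sum_eq_single
    · intro j _ hj
      have : f (j : ℕ) p = 0 := hdisj (n : ℕ) (j : ℕ) (fun h => hj (Fin.ext h.symm)) p hp
      simp [this]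
    · intro h; exact absurd (Finset.mem_univ n) h
  have zero_sum : ∀ p : M, (∀ j : Fin N, f (j : ℕ) p = 0) → g p = 0 := by
    intro p hp
    apply Finset.sum_eq_zero
    intro j _
    simp [hp j]
  -- collapse of a difference
  have key : ∀ (n : Fin N) (p q : M), (∀ j : Fin N, j ≠ n → f (j : ℕ) p = 0) →
      (∀ j : Fin N, j ≠ n → f (j : ℕ) q = 0) →
      g p - g q = l n * (f (n : ℕ) p - f (n : ℕ) q) := by
    intro n p q hp hq
    have : g p - g q = ∑ j : Fin N, (l j * f (j : ℕ) p - l j * f (j : ℕ) q) := by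
      rw [hgdef]; rw [← Finset.sum_sub_distrib]
    rw [this, Finset.sum_eq_single n]
    · ring
    · intro j _ hj
      rw [hp j hj, hq j hj]; ring
    · intro h; exact absurd (Finset.mem_univ n) h
  -- pointwise upper estimate
  have step : ∀ p q : M, |g p - g q| ≤ 2 * mx * dist p q := by
    intro p q
    by_cases hpq : ∃ n m : Fin N, f (n : ℕ) p ≠ 0 ∧ f (m : ℕ) q ≠ 0 ∧ (n : ℕ) ≠ (m : ℕ)
    · obtain ⟨n, m, hnp, hmq, hnm⟩ := hpq
      rw [single n p hnp, single m q hmq]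
      have h1 : |f (n : ℕ) p| ≤ dist p q := by
        have e1 : |f (n : ℕ) p| = |f (n : ℕ) p - f (n : ℕ) (x (n : ℕ))| := by
          rw [hxz (n : ℕ) (n : ℕ), sub_zero]
        have e2 := hfl (n : ℕ) p (x (n : ℕ))
        have e3 := hsep (n : ℕ) p hnp (m : ℕ) (Ne.symm hnm) q hmq
        rw [e1]; linarith
      have h2 : |f (m : ℕ) q| ≤ dist p q := by
        have e1 : |f (m : ℕ) q| = |f (m : ℕ) q - f (m : ℕ) (x (m : ℕ))| := by
          rw [hxz (m : ℕ) (m : ℕ), sub_zero]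
        have e2 := hfl (m : ℕ) q (x (m : ℕ))
        have e3 := hsep (m : ℕ) q hmq (n : ℕ) hnm p hnp
        rw [dist_comm p q]
        rw [e1]; linarith
      calc |l n * f (n : ℕ) p - l m * f (m : ℕ) q|
          ≤ |l n * f (n : ℕ) p| + |l m * f (m : ℕ) q| := abs_sub _ _
        _ = |l n| * |f (n : ℕ) p| + |l m| * |f (m : ℕ) q| := by rw [abs_mul, abs_mul]
        _ ≤ mx * dist p q + mx * dist p q := by
            apply add_le_add
            · exact mul_le_mul (hlemx n) h1 (abs_nonneg _) hmx0
            · exact mul_le_mul (hlemx m) h2 (abs_nonneg _) hmx0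
        _ = 2 * mx * dist p q := by ring
    · push_neg at hpq
      have hmd : 0 ≤ mx * dist p q := mul_nonneg hmx0 dist_nonneg
      by_cases hp : ∃ n : Fin N, f (n : ℕ) p ≠ 0
      · obtain ⟨n, hn⟩ := hp
        have hk := key n p q
          (fun j hj => hdisj (n : ℕ) (j : ℕ) (fun h => hj (Fin.ext h.symm)) p hn)
          (fun j hj => by
            by_contra hjq
            exact hj (Fin.ext ((hpq n j hn hjq).symm)))
        rw [hk, abs_mul]
        have := hfl (n : ℕ) p q
        have h1 : |l n| * |f (n : ℕ) p - f (n : ℕ) q| ≤ mx * dist p q :=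
          mul_le_mul (hlemx n) this (abs_nonneg _) hmx0
        linarith
      · push_neg at hp
        by_cases hq : ∃ m : Fin N, f (m : ℕ) q ≠ 0
        · obtain ⟨m, hm⟩ := hq
          have hk := key m p q (fun j _ => hp j)
            (fun j hj => hdisj (m : ℕ) (j : ℕ) (fun h => hj (Fin.ext h.symm)) q hm)
          rw [hk, abs_mul]
          have := hfl (m : ℕ) p q
          have h1 : |l m| * |f (m : ℕ) p - f (m : ℕ) q| ≤ mx * dist p q :=
            mul_le_mul (hlemx m) this (abs_nonneg _) hmx0
          linarith
        · push_neg at hq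
          rw [zero_sum p hp, zero_sum q hq]
          simpa using le_trans hmd (by linarith)
  set S : Set ℝ := {r : ℝ | ∃ a b : M, a ≠ b ∧ r = |g a - g b| / dist a b} with hSdef
  have hSle : ∀ r ∈ S, r ≤ 2 * mx := by
    rintro r ⟨a, b, hab, rfl⟩
    rw [div_le_iff₀ (dist_pos.mpr hab)]
    exact step a b
  have hSbdd : BddAbove S := ⟨2 * mx, hSle⟩
  have hupper : lipNorm g ≤ 2 * mx := by
    simp only [lipNorm]
    exact Real.sSup_le hSle (by linarith)
  have hLnn : 0 ≤ lipNorm g := by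
    simp only [lipNorm]
    apply Real.sSup_nonneg
    rintro r ⟨a, b, hab, rfl⟩
    exact div_nonneg (abs_nonneg _) dist_nonneg
  constructor
  · -- lower bound
    apply Real.iSup_le _ hLnn
    intro i
    -- the core geometric claim
    have core : ∀ p q : M, p ≠ q → f (i : ℕ) p ≠ 0 →
        ∃ a b : M, a ≠ b ∧
          |l i| * (|f (i : ℕ) p - f (i : ℕ) q| / dist p q) ≤ |g a - g b| / dist a b := by
      intro p q hpq hp
      by_cases hk : ∃ k : ℕ, k ≠ (i : ℕ) ∧ f k q ≠ 0
      · obtain ⟨k, hki, hkq⟩ := hk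
        have hfq : f (i : ℕ) q = 0 := hdisj k (i : ℕ) hki q hkq
        have hdx : dist p (x (i : ℕ)) < dist p q := hsep (i : ℕ) p hp k hki q hkq
        have hpx : p ≠ x (i : ℕ) := by
          intro h
          exact hp (by rw [h]; exact hxz (i : ℕ) (i : ℕ))
        refine ⟨p, x (i : ℕ), hpx, ?_⟩
        have gp : g p = l i * f (i : ℕ) p := single i p hp
        have gx : g (x (i : ℕ)) = 0 := zero_sum _ (fun j => hxz (i : ℕ) (j : ℕ))
        rw [gp, gx, sub_zero, abs_mul, hfq, sub_zero, mul_div_assoc]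
        have hdpos : 0 < dist p (x (i : ℕ)) := dist_pos.mpr hpx
        gcongr
      · push_neg at hk
        refine ⟨p, q, hpq, ?_⟩
        have gp : g p = l i * f (i : ℕ) p := single i p hp
        have gq : g q = l i * f (i : ℕ) q := by
          by_cases h : f (i : ℕ) q = 0
          · rw [h, mul_zero]
            apply zero_sum
            intro j
            by_cases hji : (j : ℕ) = (i : ℕ)
            · rw [hji]; exact h
            · exact hk (j : ℕ) hji
          · exact single i q h
        rw [gp, gq, ← mul_sub, abs_mul, mul_div_assoc]
    -- approximate the sup in lipNorm (f i)
    have hSi : ∀ c : ℝ, c < 1 → |l i| * c ≤ lipNorm g := by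
      intro c hc
      have h1 := hnorm (i : ℕ)
      simp only [lipNorm] at h1
      have hne : {r : ℝ | ∃ a b : M, a ≠ b ∧ r = |f (i : ℕ) a - f (i : ℕ) b| / dist a b}.Nonempty := by
        by_contra h
        rw [Set.not_nonempty_iff_eq_empty] at h
        rw [h, Real.sSup_empty] at h1
        norm_num at h1
      obtain ⟨r, hrS, hcr⟩ := exists_lt_of_lt_csSup hne (h1 ▸ hc)
      obtain ⟨p, q, hpq, rfl⟩ := hrS
      by_cases hzz : f (i : ℕ) p = 0 ∧ f (i : ℕ) q = 0
      · -- then r = 0, and c < 0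
        rw [hzz.1, hzz.2] at hcr
        simp at hcr
        have : |l i| * c ≤ 0 := mul_nonpos_of_nonneg_of_nonpos (abs_nonneg _) hcr.le
        linarith
      · have hcore : ∃ a b : M, a ≠ b ∧
            |l i| * (|f (i : ℕ) p - f (i : ℕ) q| / dist p q) ≤ |g a - g b| / dist a b := by
          by_cases hp : f (i : ℕ) p ≠ 0
          · exact core p q hpq hp
          · push_neg at hp
            have hq : f (i : ℕ) q ≠ 0 := by
              intro h; exact hzz ⟨hp, h⟩
            obtain ⟨a, b, hab, hle⟩ := core q p hpq.symm hq
            refine ⟨a, b, hab, ?_⟩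
            rw [abs_sub_comm, dist_comm] at hle
            exact hle
        obtain ⟨a, b, hab, hle⟩ := hcore
        have hmem : |g a - g b| / dist a b ∈ S := ⟨a, b, hab, rfl⟩
        have h2 : |g a - g b| / dist a b ≤ lipNorm g := by
          simp only [lipNorm]
          exact le_csSup hSbdd hmem
        have h3 : |l i| * c ≤ |l i| * (|f (i : ℕ) p - f (i : ℕ) q| / dist p q) :=
          mul_le_mul_of_nonneg_left hcr.le (abs_nonneg _)
        linarith
    -- pass to the limit c → 1
    by_contra hcon
    push_neg at hcon
    have hli : 0 < |l i| := lt_of_le_of_lt hLnn hcon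
    obtain ⟨c, hc1, hc2⟩ := exists_between ((div_lt_one hli).mpr hcon)
    have := hSi c hc2
    rw [div_lt_iff₀ hli] at hc1
    rw [mul_comm] at hc1
    linarith
  · exact hupper
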